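/- arXiv:1906.05593 — 3 statements merged into one kernel-verified Lean document; each statement's English description precedes it below -/
import Mathlib

section
/- If (A, f) is a final object in the category of coalgebras of an endofunctor F : C → C (objects are pairs (A, f) with f : A → F(A), morphisms h : (A,f) → (A',f') are h : A → A' with F(h) ∘ f = f' ∘ h), then f is an isomorphism. -/
open CategoryTheory

/-- Lambek's theorem: if `(A, f)` is a final object in the category of
coalgebras of an endofunctor `F : C ⥤ C`, then the structure map `f` is an
isomorphism. -/
theorem lambek_final_coalgebra {C : Type*} [Category C] (F : C ⥤ C)
    (A : Endofunctor.Coalgebra F) (h : Limits.IsTerminal A) :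
    IsIso A.str := by
  let B : Endofunctor.Coalgebra F := ⟨F.obj A.V, F.map A.str⟩
  let g : B ⟶ A := h.from B
  have right : A.str ≫ g.f = 𝟙 A.V := by
    have hg := g.h
    simp only [B] at hg
    have := h.hom_ext (⟨A.str ≫ g.f, by
      rw [F.map_comp, hg, Category.assoc]⟩ : A ⟶ A) (𝟙 A)
    exact congrArg Endofunctor.Coalgebra.Hom.f this
  have left : g.f ≫ A.str = 𝟙 (F.obj A.V) := by
    have := g.h
    simp only [B] at this
    rw [← this, ← F.map_comp, right, F.map_id]
  exact ⟨g.f, right, left⟩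
end

section
/- The coherence space N of strict natural numbers dictated by the least fixed point of E ↦ 1 ⊕ E has web ℕ with coherence being equality. The map Θ on totality candidates of N defined by Θ(T) = {{0}} ∪ { x+1 : x ∈ T } (where x+1 = {n+1 : n ∈ x}) has least fixed point T = { {n} : n ∈ ℕ }. In particular, T⊥ = { ℕ } and T⊥⊥ = T. -/
/-- A coherence space: a web together with a reflexive symmetric coherence
relation supported on the web. -/
structure CohSpace (α : Type*) where
  web : Set α
  coh : α → α → Prop
  coh_mem_left : ∀ {a a'}, coh a a' → a ∈ web
  coh_mem_right : ∀ {a a'}, coh a a' → a' ∈ web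
  coh_refl : ∀ a ∈ web, coh a a
  coh_symm : ∀ {a a'}, coh a a' → coh a' a

namespace CohSpace

variable {α : Type*} {β : Type*}

/-- The subspace order `E ⊑ F`. -/
def Subcoh (E F : CohSpace α) : Prop :=
  E.web ⊆ F.web ∧ ∀ a ∈ E.web, ∀ a' ∈ E.web, (E.coh a a' ↔ F.coh a a')

end CohSpace
namespace CohSpace

variable {α : Type*} {β : Type*}

/-- The linear negation (dual) of a coherence space: same web, incoherence
`a ≎ a'` iff `a ≍ a' → a = a'`. -/
def dual (E : CohSpace α) : CohSpace α where
  web := E.web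
  coh a a' := a ∈ E.web ∧ a' ∈ E.web ∧ (E.coh a a' → a = a')
  coh_mem_left h := h.1
  coh_mem_right h := h.2.1
  coh_refl a ha := ⟨ha, ha, fun _ => rfl⟩
  coh_symm h := ⟨h.2.1, h.1, fun hc => (h.2.2 (E.coh_symm hc)).symm⟩

end CohSpace
namespace CohSpace

variable {α : Type*} {β : Type*}

/-- A clique of a coherence space. -/
def Clique (E : CohSpace α) (u : Set α) : Prop :=
  u ⊆ E.web ∧ ∀ a ∈ u, ∀ a' ∈ u, E.coh a a'

/-- The orthogonal of a set of cliques: `𝒜⊥` consists of the cliques of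
`E⊥` meeting every member of `𝒜`. -/
def orth (E : CohSpace α) (𝒜 : Set (Set α)) : Set (Set α) :=
  {x' | E.dual.Clique x' ∧ ∀ x ∈ 𝒜, (x ∩ x').Nonempty}

end CohSpace
namespace CohSpace

variable {α : Type*} {β : Type*}

/-- Totality candidates: biorthogonally closed sets of cliques of `E`. -/
def Tot (E : CohSpace α) : Set (Set (Set α)) :=
  {T | (∀ x ∈ T, E.Clique x) ∧ E.dual.orth (E.orth T) = T}

end CohSpace

namespace CohSpace

/-- The coherence space of strict natural numbers: web `ℕ`, coherence is
equality. -/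
def natCoh : CohSpace ℕ where
  web := Set.univ
  coh n m := n = m
  coh_mem_left _ := Set.mem_univ _
  coh_mem_right _ := Set.mem_univ _
  coh_refl _ _ := rfl
  coh_symm h := h.symm

/-- The operator `Θ(T) = {{0}} ∪ {x+1 : x ∈ T}` on sets of cliques of
`natCoh`. -/
def natStep (T : Set (Set ℕ)) : Set (Set ℕ) :=
  insert {0} ((fun x : Set ℕ => (· + 1) '' x) '' T)

/-- The set of singletons `{n}`. -/
def natTot : Set (Set ℕ) :=
  Set.range fun n : ℕ => ({n} : Set ℕ)

end CohSpace

open CohSpace in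
lemma orth_natTot' : natCoh.orth natTot = {Set.univ} := by
  ext x'
  simp only [CohSpace.orth, Set.mem_setOf_eq, Set.mem_singleton_iff]
  constructor
  · rintro ⟨_, h⟩
    ext n
    simp only [Set.mem_univ, iff_true]
    obtain ⟨m, hm1, hm2⟩ := h {n} ⟨n, rfl⟩
    rw [Set.mem_singleton_iff] at hm1; subst hm1; exact hm2
  · rintro rfl
    refine ⟨⟨fun _ _ => trivial, fun a _ a' _ => ⟨trivial, trivial, id⟩⟩, ?_⟩
    rintro x ⟨n, rfl⟩
    exact ⟨n, rfl, trivial⟩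

open CohSpace in
lemma biorth_natTot' : natCoh.dual.orth {Set.univ} = natTot := by
  ext x
  simp only [CohSpace.orth, Set.mem_setOf_eq, Set.mem_singleton_iff]
  constructor
  · rintro ⟨⟨_, hcoh⟩, hmeet⟩
    obtain ⟨n, _, hn⟩ := hmeet Set.univ rfl
    refine ⟨n, ?_⟩
    ext m
    simp only [Set.mem_singleton_iff]
    constructor
    · rintro rfl; exact hn
    · intro hm
      exact ((hcoh m hm n hn).2.2 ⟨trivial, trivial, fun h => h⟩)
  · rintro ⟨n, rfl⟩
    refine ⟨⟨fun _ _ => trivial, ?_⟩, fun y hy => ?_⟩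
    · rintro a ha a' ha'
      rw [Set.mem_singleton_iff] at ha ha'
      subst ha; subst ha'
      exact natCoh.dual.dual.coh_refl _ trivial
    · subst hy
      exact ⟨n, trivial, rfl⟩

open CohSpace in
lemma natStep_fix' : natStep natTot = natTot := by
  ext x
  simp only [natStep, Set.mem_insert_iff, Set.mem_image, natTot, Set.mem_range]
  constructor
  · rintro (rfl | ⟨y, ⟨n, rfl⟩, rfl⟩)
    · exact ⟨0, rfl⟩
    · exact ⟨n + 1, by rw [Set.image_singleton]⟩
  · rintro ⟨n, rfl⟩
    cases n with
    | zero => left; rfl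
    | succ k => right; exact ⟨{k}, ⟨k, rfl⟩, Set.image_singleton⟩

open CohSpace in
lemma natStep_least' (T : Set (Set ℕ)) (hT : natStep T = T) : natTot ⊆ T := by
  rintro x ⟨n, rfl⟩
  induction n with
  | zero => rw [← hT]; left; rfl
  | succ k ih =>
    rw [← hT]; right
    exact ⟨{k}, ih, Set.image_singleton⟩

open CohSpace in
/-- The coherence space of strict natural numbers has web `ℕ` with coherence
equality; the operator `Θ` has least fixed point `{ {n} : n ∈ ℕ }` among
totality candidates; its orthogonal is `{ℕ}` and it is biorthogonally
closed. -/
theorem nat_tot_least_fixed_point :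
    (natCoh.web = Set.univ ∧ ∀ n m : ℕ, natCoh.coh n m ↔ n = m) ∧
    natTot ∈ natCoh.Tot ∧
    natStep natTot = natTot ∧
    (∀ T ∈ natCoh.Tot, natStep T = T → natTot ⊆ T) ∧
    natCoh.orth natTot = {Set.univ} ∧
    natCoh.dual.orth (natCoh.orth natTot) = natTot := by
  refine ⟨⟨rfl, fun n m => Iff.rfl⟩, ⟨?_, ?_⟩, natStep_fix', fun T _ h => natStep_least' T h, orth_natTot', ?_⟩
  · rintro x ⟨n, rfl⟩
    exact ⟨fun _ _ => trivial, by
      rintro a ha a' ha'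
      rw [Set.mem_singleton_iff] at ha ha'
      subst ha; subst ha'; rfl⟩
  · rw [orth_natTot', biorth_natTot']
  · rw [orth_natTot', biorth_natTot']
end

section
/- In the call-by-value Gödel's System T with natural number type, λ-abstraction, application, successor, recursor Rec, and let-binding, with weak-head reduction ⇝: every closed, weak-head-normal term of type nat is a numeral n̄ for some n ∈ ℕ; consequently, weak-head reduction is normalizing on closed terms of type nat (every closed term of type nat reduces to a numeral). -/
/-- Types of System T: `nat` and function types. -/
inductive Ty : Type
  | nat : Ty
  | arrow : Ty → Ty → Ty

/-- Terms of System T (de Bruijn indices): numerals, variables, application,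
λ-abstraction, successor, recursor, and let-binding. -/
inductive Tm : Type
  | num : ℕ → Tm
  | var : ℕ → Tm
  | app : Tm → Tm → Tm
  | lam : Ty → Tm → Tm
  | succ : Tm → Tm
  | recN : Tm → Tm → Tm → Tm
  | lett : Tm → Tm → Tm

namespace Tm

/-- Substitution of a (closed) term for de Bruijn index `k`. -/
def subst (u : Tm) : ℕ → Tm → Tm
  | _, num n => num n
  | k, var i => if i = k then u else if k < i then var (i - 1) else var i
  | k, app s t => app (subst u k s) (subst u k t)
  | k, lam σ s => lam σ (subst u (k + 1) s)
  | k, succ s => succ (subst u k s)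
  | k, recN s t v => recN (subst u k s) (subst u k t) (subst u k v)
  | k, lett s t => lett (subst u k s) (subst u (k + 1) t)

/-- Typing judgment `Γ ⊢ s : σ`. -/
inductive HasTy : List Ty → Tm → Ty → Prop
  | num (Γ : List Ty) (n : ℕ) : HasTy Γ (num n) Ty.nat
  | var (Γ : List Ty) (i : ℕ) (σ : Ty) (h : Γ[i]? = some σ) :
      HasTy Γ (var i) σ
  | app (Γ : List Ty) (s t : Tm) (σ τ : Ty) (hs : HasTy Γ s (Ty.arrow σ τ))
      (ht : HasTy Γ t σ) : HasTy Γ (app s t) τ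
  | lam (Γ : List Ty) (s : Tm) (σ τ : Ty) (hs : HasTy (σ :: Γ) s τ) :
      HasTy Γ (lam σ s) (Ty.arrow σ τ)
  | succ (Γ : List Ty) (s : Tm) (hs : HasTy Γ s Ty.nat) :
      HasTy Γ (succ s) Ty.nat
  | recN (Γ : List Ty) (s t u : Tm) (σ : Ty) (hs : HasTy Γ s Ty.nat)
      (ht : HasTy Γ t σ) (hu : HasTy Γ u (Ty.arrow Ty.nat (Ty.arrow σ σ))) :
      HasTy Γ (recN s t u) σ
  | lett (Γ : List Ty) (s t : Tm) (σ : Ty) (hs : HasTy Γ s Ty.nat)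
      (ht : HasTy (Ty.nat :: Γ) t σ) : HasTy Γ (lett s t) σ

/-- Weak-head reduction. -/
inductive Step : Tm → Tm → Prop
  | beta (σ : Ty) (s t : Tm) : Step (app (lam σ s) t) (subst t 0 s)
  | lett (n : ℕ) (s : Tm) : Step (lett (num n) s) (subst (num n) 0 s)
  | succ (n : ℕ) : Step (succ (num n)) (num (n + 1))
  | recZero (t u : Tm) : Step (recN (num 0) t u) t
  | recSucc (n : ℕ) (t u : Tm) :
      Step (recN (num (n + 1)) t u) (app (app u (num n)) (recN (num n) t u))
  | appHead (s s' t : Tm) : Step s s' → Step (app s t) (app s' t)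
  | lettHead (s s' t : Tm) : Step s s' → Step (lett s t) (lett s' t)
  | succHead (s s' : Tm) : Step s s' → Step (succ s) (succ s')
  | recHead (s s' t u : Tm) : Step s s' → Step (recN s t u) (recN s' t u)

end Tm

namespace Tm

/-- `ClosedAbove k s`: all free variables of `s` are `< k`. -/
def ClosedAbove : ℕ → Tm → Prop
  | _, num _ => True
  | k, var i => i < k
  | k, app s t => ClosedAbove k s ∧ ClosedAbove k t
  | k, lam _ s => ClosedAbove (k + 1) s
  | k, succ s => ClosedAbove k s
  | k, recN s t u => ClosedAbove k s ∧ ClosedAbove k t ∧ ClosedAbove k u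
  | k, lett s t => ClosedAbove k s ∧ ClosedAbove (k + 1) t

theorem subst_var_eq (u : Tm) (k : ℕ) : subst u k (var k) = u := by
  simp [subst]

theorem subst_var_lt (u : Tm) {i k : ℕ} (h : i < k) : subst u k (var i) = var i := by
  simp only [subst]
  rw [if_neg (by omega), if_neg (by omega)]

theorem subst_var_gt (u : Tm) {i k : ℕ} (h : k < i) : subst u k (var i) = var (i - 1) := by
  simp only [subst]
  rw [if_neg (by omega), if_pos h]

theorem closedAbove_mono : ∀ (s : Tm) (k j : ℕ), k ≤ j → ClosedAbove k s → ClosedAbove j s := by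
  intro s
  induction s with
  | num n => intros; trivial
  | var i => intro k j h hc; exact lt_of_lt_of_le hc h
  | app s t ihs iht => intro k j h hc; exact ⟨ihs k j h hc.1, iht k j h hc.2⟩
  | lam σ s ih => intro k j h hc; exact ih (k+1) (j+1) (by omega) hc
  | succ s ih => intro k j h hc; exact ih k j h hc
  | recN s t u ihs iht ihu =>
      intro k j h hc; exact ⟨ihs k j h hc.1, iht k j h hc.2.1, ihu k j h hc.2.2⟩
  | lett s t ihs iht =>
      intro k j h hc; exact ⟨ihs k j h hc.1, iht (k+1) (j+1) (by omega) hc.2⟩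

theorem subst_closed (u : Tm) : ∀ (s : Tm) (k j : ℕ), k ≤ j → ClosedAbove k s →
    subst u j s = s := by
  intro s
  induction s with
  | num n => intros; rfl
  | var i =>
      intro k j h hc
      exact subst_var_lt u (lt_of_lt_of_le hc h)
  | app s t ihs iht => intro k j h hc; simp [subst, ihs k j h hc.1, iht k j h hc.2]
  | lam σ s ih => intro k j h hc; simp [subst, ih (k+1) (j+1) (by omega) hc]
  | succ s ih => intro k j h hc; simp [subst, ih k j h hc]
  | recN s t v ihs iht ihv =>
      intro k j h hc; simp [subst, ihs k j h hc.1, iht k j h hc.2.1, ihv k j h hc.2.2]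
  | lett s t ihs iht =>
      intro k j h hc; simp [subst, ihs k j h hc.1, iht (k+1) (j+1) (by omega) hc.2]

theorem closedAbove_subst (u : Tm) (hu : ClosedAbove 0 u) :
    ∀ (s : Tm) (k m : ℕ), k ≤ m → ClosedAbove (m + 1) s → ClosedAbove m (subst u k s) := by
  intro s
  induction s with
  | num n => intros; trivial
  | var i =>
      intro k m h hc
      by_cases h1 : i = k
      · simpa [subst, h1] using closedAbove_mono u 0 m (Nat.zero_le _) hu
      · by_cases h2 : k < i
        · simp only [subst, if_neg h1, if_pos h2]
          simp only [ClosedAbove] at hc ⊢; omega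
        · simp only [subst, if_neg h1, if_neg h2]
          simp only [ClosedAbove] at hc ⊢; omega
  | app s t ihs iht => intro k m h hc; exact ⟨ihs k m h hc.1, iht k m h hc.2⟩
  | lam σ s ih => intro k m h hc; exact ih (k+1) (m+1) (by omega) hc
  | succ s ih => intro k m h hc; exact ih k m h hc
  | recN s t v ihs iht ihv =>
      intro k m h hc; exact ⟨ihs k m h hc.1, iht k m h hc.2.1, ihv k m h hc.2.2⟩
  | lett s t ihs iht =>
      intro k m h hc; exact ⟨ihs k m h hc.1, iht (k+1) (m+1) (by omega) hc.2⟩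

theorem step_closedAbove : ∀ {s s' : Tm}, Step s s' → ClosedAbove 0 s → ClosedAbove 0 s' := by
  intro s s' h
  induction h with
  | beta σ s t => intro hc; exact closedAbove_subst t hc.2 s 0 0 le_rfl hc.1
  | lett n s => intro hc; exact closedAbove_subst (num n) trivial s 0 0 le_rfl hc.2
  | succ n => intro _; trivial
  | recZero t u => intro hc; exact hc.2.1
  | recSucc n t u => intro hc; exact ⟨⟨hc.2.2, trivial⟩, trivial, hc.2.1, hc.2.2⟩
  | appHead s s' t _ ih => intro hc; exact ⟨ih hc.1, hc.2⟩
  | lettHead s s' t _ ih => intro hc; exact ⟨ih hc.1, hc.2⟩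
  | succHead s s' _ ih => intro hc; exact ih hc
  | recHead s s' t u _ ih => intro hc; exact ⟨ih hc.1, hc.2⟩

theorem subst_subst (t u : Tm) (ht : ClosedAbove 0 t) (hu : ClosedAbove 0 u) :
    ∀ (s : Tm) (k : ℕ), subst t k (subst u (k + 1) s) = subst u k (subst t k s) := by
  intro s
  induction s with
  | num n => intros; rfl
  | var i =>
      intro k
      rcases Nat.lt_trichotomy i k with h | rfl | h
      · rw [subst_var_lt u (by omega), subst_var_lt t h, subst_var_lt u h]
      · rw [subst_var_lt u (by omega), subst_var_eq,
          subst_closed u t 0 _ (Nat.zero_le _) ht]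
      · rcases Nat.lt_trichotomy i (k + 1) with h2 | rfl | h2
        · omega
        · rw [subst_var_eq, subst_closed t u 0 k (Nat.zero_le _) hu,
            subst_var_gt t (by omega)]
          simp only [Nat.add_sub_cancel]
          rw [subst_var_eq]
        · rw [subst_var_gt u h2, subst_var_gt t (by omega), subst_var_gt t h,
            subst_var_gt u (by omega)]
  | app s v ihs ihv => intro k; simp [subst, ihs, ihv]
  | lam σ s ih => intro k; simp [subst, ih]
  | succ s ih => intro k; simp [subst, ih]
  | recN s v w ihs ihv ihw => intro k; simp [subst, ihs, ihv, ihw]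
  | lett s v ihs ihv => intro k; simp [subst, ihs, ihv]

/-- Simultaneous substitution of a list of closed terms starting at index `k`. -/
def msubst : List Tm → ℕ → Tm → Tm
  | [], _, s => s
  | u :: γ, k, s => msubst γ k (subst u k s)

def ClosedEnv (γ : List Tm) : Prop := ∀ u ∈ γ, ClosedAbove 0 u

theorem msubst_of_closed : ∀ (γ : List Tm) (k : ℕ) (s : Tm), ClosedAbove 0 s →
    msubst γ k s = s := by
  intro γ
  induction γ with
  | nil => intros; rfl
  | cons u γ ih =>
      intro k s hs
      simp only [msubst]
      rw [subst_closed u s 0 k (Nat.zero_le _) hs]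
      exact ih k s hs

theorem msubst_num (γ : List Tm) (k : ℕ) (n : ℕ) : msubst γ k (num n) = num n :=
  msubst_of_closed γ k (num n) trivial

theorem msubst_app : ∀ (γ : List Tm) (k : ℕ) (s t : Tm),
    msubst γ k (app s t) = app (msubst γ k s) (msubst γ k t) := by
  intro γ
  induction γ with
  | nil => intros; rfl
  | cons u γ ih => intro k s t; simp only [msubst, subst]; rw [ih]

theorem msubst_lam : ∀ (γ : List Tm) (k : ℕ) (σ : Ty) (s : Tm),
    msubst γ k (lam σ s) = lam σ (msubst γ (k + 1) s) := by
  intro γ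
  induction γ with
  | nil => intros; rfl
  | cons u γ ih => intro k σ s; simp only [msubst, subst]; rw [ih]

theorem msubst_succ : ∀ (γ : List Tm) (k : ℕ) (s : Tm),
    msubst γ k (succ s) = succ (msubst γ k s) := by
  intro γ
  induction γ with
  | nil => intros; rfl
  | cons u γ ih => intro k s; simp only [msubst, subst]; rw [ih]

theorem msubst_recN : ∀ (γ : List Tm) (k : ℕ) (s t v : Tm),
    msubst γ k (recN s t v) = recN (msubst γ k s) (msubst γ k t) (msubst γ k v) := by
  intro γ
  induction γ with
  | nil => intros; rfl
  | cons u γ ih => intro k s t v; simp only [msubst, subst]; rw [ih]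

theorem msubst_lett : ∀ (γ : List Tm) (k : ℕ) (s t : Tm),
    msubst γ k (lett s t) = lett (msubst γ k s) (msubst γ (k + 1) t) := by
  intro γ
  induction γ with
  | nil => intros; rfl
  | cons u γ ih => intro k s t; simp only [msubst, subst]; rw [ih]

theorem subst_msubst (t : Tm) (ht : ClosedAbove 0 t) :
    ∀ (γ : List Tm), ClosedEnv γ → ∀ (k : ℕ) (s : Tm),
    subst t k (msubst γ (k + 1) s) = msubst γ k (subst t k s) := by
  intro γ
  induction γ with
  | nil => intros; rfl
  | cons u γ ih =>
      intro hγ k s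
      have hu : ClosedAbove 0 u := hγ u (List.mem_cons_self)
      simp only [msubst]
      rw [ih (fun v hv => hγ v (List.mem_cons_of_mem u hv)) k,
        subst_subst t u ht hu s k]

theorem closedAbove_msubst : ∀ (γ : List Tm), ClosedEnv γ → ∀ (k : ℕ) (s : Tm),
    ClosedAbove (k + γ.length) s → ClosedAbove k (msubst γ k s) := by
  intro γ
  induction γ with
  | nil => intro _ k s hs; exact hs
  | cons u γ ih =>
      intro hγ k s hs
      simp only [msubst]
      apply ih (fun v hv => hγ v (List.mem_cons_of_mem u hv))
      apply closedAbove_subst u (hγ u (List.mem_cons_self)) s k (k + γ.length)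
        (by omega)
      have hlen : k + (u :: γ).length = k + γ.length + 1 := by
        simp [List.length_cons]; omega
      exact hlen ▸ hs

/-- Reducibility predicate. -/
def Red : Ty → Tm → Prop
  | Ty.nat, s => ClosedAbove 0 s ∧ ∃ n : ℕ, Relation.ReflTransGen Step s (num n)
  | Ty.arrow σ τ, s => ClosedAbove 0 s ∧ ∀ t : Tm, Red σ t → Red τ (app s t)

theorem red_closed : ∀ (σ : Ty) (s : Tm), Red σ s → ClosedAbove 0 s := by
  intro σ s h
  cases σ <;> exact h.1

theorem head_expand : ∀ (σ : Ty) (s s' : Tm), Step s s' → ClosedAbove 0 s →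
    Red σ s' → Red σ s := by
  intro σ
  induction σ with
  | nat =>
      intro s s' h hc hr
      exact ⟨hc, hr.2.choose, Relation.ReflTransGen.head h hr.2.choose_spec⟩
  | arrow σ τ ihσ ihτ =>
      intro s s' h hc hr
      refine ⟨hc, fun t ht => ?_⟩
      exact ihτ (app s t) (app s' t) (Step.appHead s s' t h) ⟨hc, red_closed σ t ht⟩
        (hr.2 t ht)

theorem heads_expand (σ : Ty) : ∀ (s s' : Tm), Relation.ReflTransGen Step s s' →
    ClosedAbove 0 s → Red σ s' → Red σ s := by
  intro s s' h
  induction h using Relation.ReflTransGen.head_induction_on with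
  | refl => intro _ hr; exact hr
  | head hstep _ ih =>
      intro hc hr
      exact head_expand σ _ _ hstep hc (ih (step_closedAbove hstep hc) hr)

theorem rtg_succ {s s' : Tm} (h : Relation.ReflTransGen Step s s') :
    Relation.ReflTransGen Step (succ s) (succ s') :=
  h.lift (fun x => succ x) (fun _ _ h => Step.succHead _ _ h)

theorem rtg_rec {s s' : Tm} (t u : Tm) (h : Relation.ReflTransGen Step s s') :
    Relation.ReflTransGen Step (recN s t u) (recN s' t u) :=
  h.lift (fun x => recN x t u) (fun _ _ h => Step.recHead _ _ _ _ h)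

theorem rtg_lett {s s' : Tm} (t : Tm) (h : Relation.ReflTransGen Step s s') :
    Relation.ReflTransGen Step (lett s t) (lett s' t) :=
  h.lift (fun x => lett x t) (fun _ _ h => Step.lettHead _ _ _ h)

theorem red_num (n : ℕ) : Red Ty.nat (num n) := ⟨trivial, n, Relation.ReflTransGen.refl⟩

theorem red_rec_num (σ : Ty) (t u : Tm) (ht : Red σ t)
    (hu : Red (Ty.arrow Ty.nat (Ty.arrow σ σ)) u) :
    ∀ n : ℕ, Red σ (recN (num n) t u) := by
  intro n
  induction n with
  | zero =>
      exact head_expand σ _ _ (Step.recZero t u)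
        ⟨trivial, red_closed σ t ht, red_closed _ u hu⟩ ht
  | succ n ih =>
      apply head_expand σ _ _ (Step.recSucc n t u)
        ⟨trivial, red_closed σ t ht, red_closed _ u hu⟩
      exact (hu.2 (num n) (red_num n)).2 _ ih

theorem forallTwo_closedEnv : ∀ {Γ : List Ty} {γ : List Tm}, List.Forall₂ Red Γ γ →
    ClosedEnv γ := by
  intro Γ γ h
  induction h with
  | nil => intro u hu; cases hu
  | cons hr _ ih =>
      intro u hu
      rcases List.mem_cons.mp hu with rfl | hu
      · exact red_closed _ _ hr
      · exact ih u hu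

theorem red_var : ∀ {Γ : List Ty} {γ : List Tm}, List.Forall₂ Red Γ γ →
    ∀ (i : ℕ) (σ : Ty), Γ[i]? = some σ → Red σ (msubst γ 0 (var i)) := by
  intro Γ γ h
  induction h with
  | nil => intro i σ h; simp at h
  | @cons σ₀ t Γ γ hr hf ih =>
      intro i σ hi
      cases i with
      | zero =>
          simp only [List.getElem?_cons_zero] at hi
          cases hi
          simp only [msubst]
          rw [subst_var_eq, msubst_of_closed γ 0 t (red_closed _ _ hr)]
          exact hr
      | succ i =>
          simp only [List.getElem?_cons_succ] at hi
          have : msubst (t :: γ) 0 (var (i + 1)) = msubst γ 0 (var i) := by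
            simp only [msubst]
            rw [subst_var_gt t (by omega)]
            simp only [Nat.add_sub_cancel]
          rw [this]
          exact ih i σ hi

theorem hasTy_closedAbove : ∀ {Γ : List Ty} {s : Tm} {σ : Ty}, HasTy Γ s σ →
    ClosedAbove Γ.length s := by
  intro Γ s σ h
  induction h with
  | num Γ n => trivial
  | var Γ i σ hi => exact List.getElem?_eq_some_iff.mp hi |>.choose
  | app Γ s t σ τ hs ht ihs iht => exact ⟨ihs, iht⟩
  | lam Γ s σ τ hs ih => exact ih
  | succ Γ s hs ih => exact ih
  | recN Γ s t u σ hs ht hu ihs iht ihu => exact ⟨ihs, iht, ihu⟩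
  | lett Γ s t σ hs ht ihs iht => exact ⟨ihs, iht⟩

theorem fundamental : ∀ {Γ : List Ty} {s : Tm} {σ : Ty}, HasTy Γ s σ →
    ∀ γ : List Tm, List.Forall₂ Red Γ γ → Red σ (msubst γ 0 s) := by
  intro Γ s σ h
  induction h with
  | num Γ n => intro γ hγ; rw [msubst_num]; exact red_num n
  | var Γ i σ hi => intro γ hγ; exact red_var hγ i σ hi
  | app Γ s t σ τ hs ht ihs iht =>
      intro γ hγ
      rw [msubst_app]
      exact (ihs γ hγ).2 _ (iht γ hγ)
  | lam Γ s σ τ hs ih =>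
      intro γ hγ
      rw [msubst_lam]
      have hγc : ClosedEnv γ := forallTwo_closedEnv hγ
      have hlen : γ.length = Γ.length := (List.Forall₂.length_eq hγ).symm
      have hcs : ClosedAbove (Γ.length + 1) s := hasTy_closedAbove hs
      have hbody : ClosedAbove 1 (msubst γ 1 s) := by
        apply closedAbove_msubst γ hγc 1 s
        rw [hlen]
        exact closedAbove_mono s (Γ.length + 1) (1 + Γ.length) (by omega) hcs
      refine ⟨hbody, fun t ht => ?_⟩
      have htc : ClosedAbove 0 t := red_closed σ t ht
      apply head_expand τ _ _ (Step.beta σ (msubst γ 1 s) t) ⟨hbody, htc⟩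
      have := subst_msubst t htc γ hγc 0 s
      rw [show (0:ℕ) + 1 = 1 from rfl] at this
      rw [this]
      exact ih (t :: γ) (List.Forall₂.cons ht hγ)
  | succ Γ s hs ih =>
      intro γ hγ
      rw [msubst_succ]
      obtain ⟨hc, n, hn⟩ := ih γ hγ
      refine ⟨hc, n + 1, ?_⟩
      exact Relation.ReflTransGen.trans (rtg_succ hn)
        (Relation.ReflTransGen.single (Step.succ n))
  | recN Γ s t u σ hs ht hu ihs iht ihu =>
      intro γ hγ
      rw [msubst_recN]
      obtain ⟨hc, n, hn⟩ := ihs γ hγ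
      have ht' := iht γ hγ
      have hu' := ihu γ hγ
      apply heads_expand σ _ _ (rtg_rec _ _ hn)
        ⟨hc, red_closed σ _ ht', red_closed _ _ hu'⟩
      exact red_rec_num σ _ _ ht' hu' n
  | lett Γ s t σ hs ht ihs iht =>
      intro γ hγ
      rw [msubst_lett]
      obtain ⟨hc, n, hn⟩ := ihs γ hγ
      have hγc : ClosedEnv γ := forallTwo_closedEnv hγ
      have hlen : γ.length = Γ.length := (List.Forall₂.length_eq hγ).symm
      have hct : ClosedAbove (Γ.length + 1) t := hasTy_closedAbove ht
      have hbody : ClosedAbove 1 (msubst γ 1 t) := by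
        apply closedAbove_msubst γ hγc 1 t
        rw [hlen]
        exact closedAbove_mono t (Γ.length + 1) (1 + Γ.length) (by omega) hct
      apply heads_expand σ _ _ (rtg_lett _ hn) ⟨hc, hbody⟩
      apply head_expand σ _ _ (Step.lett n (msubst γ 1 t)) ⟨trivial, hbody⟩
      have := subst_msubst (num n) trivial γ hγc 0 t
      rw [show (0:ℕ) + 1 = 1 from rfl] at this
      rw [this]
      exact iht (num n :: γ) (List.Forall₂.cons (red_num n) hγ)

end Tm

/-- Every closed weak-head-normal term of type `nat` is a numeral, and
weak-head reduction is normalizing on closed terms of type `nat`: every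
closed term of type `nat` reduces to a numeral. -/
theorem systemT_normalization :
    (∀ s : Tm, Tm.HasTy [] s Ty.nat → (∀ s' : Tm, ¬ Tm.Step s s') →
      ∃ n : ℕ, s = Tm.num n) ∧
    (∀ s : Tm, Tm.HasTy [] s Ty.nat →
      ∃ n : ℕ, Relation.ReflTransGen Tm.Step s (Tm.num n)) := by
  have norm : ∀ s : Tm, Tm.HasTy [] s Ty.nat →
      ∃ n : ℕ, Relation.ReflTransGen Tm.Step s (Tm.num n) := by
    intro s hs
    have h := Tm.fundamental hs [] List.Forall₂.nil
    exact h.2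
  constructor
  · intro s hs hnf
    obtain ⟨n, hn⟩ := norm s hs
    rcases Relation.ReflTransGen.cases_head hn with h | ⟨c, hc, _⟩
    · exact ⟨n, h⟩
    · exact absurd hc (hnf c)
  · exact norm
end
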